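/- Let H₁, H₂, H₃ be Hilbert spaces and X: H₁ → H₃, Y: H₂ → H₃ bounded linear operators. If there exists c > 0 such that ‖X* z‖ ≤ c ‖Y* z‖ for all z ∈ H₃, then the range of X is contained in the range of Y. -/

import Mathlib

/- Douglas–Dolecki–Russell lemma, direction (b) ⇒ (a): if ‖X* z‖ ≤ c ‖Y* z‖ for all z
   (for some c > 0), then ran X ⊆ ran Y. -/
theorem stmt_12 {H₁ H₂ H₃ : Type*}
    [NormedAddCommGroup H₁] [InnerProductSpace ℝ H₁] [CompleteSpace H₁]
    [NormedAddCommGroup H₂] [InnerProductSpace ℝ H₂] [CompleteSpace H₂]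
    [NormedAddCommGroup H₃] [InnerProductSpace ℝ H₃] [CompleteSpace H₃]
    (Xop : H₁ →L[ℝ] H₃) (Yop : H₂ →L[ℝ] H₃)
    (h : ∃ c > (0 : ℝ), ∀ z : H₃, ‖Xop.adjoint z‖ ≤ c * ‖Yop.adjoint z‖) :
    Set.range Xop ⊆ Set.range Yop := by
  obtain ⟨c, hc, hineq⟩ := h
  rintro _ ⟨x, rfl⟩
  -- the functional z ↦ ⟪x, X* z⟫
  set L : H₃ →L[ℝ] ℝ := (innerSL ℝ x).comp Xop.adjoint with hL
  set Y' : H₃ →ₗ[ℝ] H₂ := Yop.adjoint.toLinearMap with hY'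
  have hker : LinearMap.ker Y' ≤ LinearMap.ker (L.toLinearMap) := by
    intro z hz
    have hz' : Yop.adjoint z = 0 := hz
    have h0 : ‖Xop.adjoint z‖ ≤ 0 := by
      have := hineq z
      rwa [hz', norm_zero, mul_zero] at this
    have hX0 : Xop.adjoint z = 0 := by
      simpa using le_antisymm h0 (norm_nonneg _)
    simp [LinearMap.mem_ker, hL, hX0]
  -- factor L through the range of Y*
  set f₀ : LinearMap.range Y' →ₗ[ℝ] ℝ :=
    ((LinearMap.ker Y').liftQ L.toLinearMap hker).comp
      (Y'.quotKerEquivRange).symm.toLinearMap with hf₀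
  have hf₀eval : ∀ z : H₃, f₀ ⟨Y' z, LinearMap.mem_range_self _ z⟩ = L z := by
    intro z
    have he : Y'.quotKerEquivRange (Submodule.Quotient.mk z)
        = ⟨Y' z, LinearMap.mem_range_self _ z⟩ :=
      Subtype.ext (LinearMap.quotKerEquivRange_apply_mk Y' z)
    have : (Y'.quotKerEquivRange).symm ⟨Y' z, LinearMap.mem_range_self _ z⟩
        = Submodule.Quotient.mk z := by
      rw [← he]; exact (Y'.quotKerEquivRange).symm_apply_apply _
    simp [hf₀, this]
  have hbound : ∀ u : LinearMap.range Y', ‖f₀ u‖ ≤ (c * ‖x‖) * ‖u‖ := by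
    rintro ⟨u, z, rfl⟩
    rw [hf₀eval z]
    have h1 : ‖L z‖ ≤ ‖x‖ * ‖Xop.adjoint z‖ := by
      simpa [hL] using norm_inner_le_norm (𝕜 := ℝ) x (Xop.adjoint z)
    have h2 : ‖x‖ * ‖Xop.adjoint z‖ ≤ ‖x‖ * (c * ‖Yop.adjoint z‖) :=
      mul_le_mul_of_nonneg_left (hineq z) (norm_nonneg x)
    calc ‖L z‖ ≤ ‖x‖ * (c * ‖Yop.adjoint z‖) := h1.trans h2
      _ = (c * ‖x‖) * ‖(⟨Y' z, LinearMap.mem_range_self _ z⟩ : LinearMap.range Y')‖ := by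
          have hn : ‖(⟨Y' z, LinearMap.mem_range_self _ z⟩ : LinearMap.range Y')‖
              = ‖Yop.adjoint z‖ := rfl
          rw [hn]; ring
  set F₀ : LinearMap.range Y' →L[ℝ] ℝ := f₀.mkContinuous (c * ‖x‖) hbound with hF₀
  obtain ⟨g, hg, -⟩ := exists_extension_norm_eq (LinearMap.range Y') F₀
  set w : H₂ := (InnerProductSpace.toDual ℝ H₂).symm g with hw
  refine ⟨w, ?_⟩
  apply ext_inner_right ℝ
  intro z
  have h1 : (inner ℝ (Yop w) z : ℝ) = inner ℝ w (Yop.adjoint z) :=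
    (ContinuousLinearMap.adjoint_inner_right Yop w z).symm
  have h2 : (inner ℝ w (Yop.adjoint z) : ℝ) = g (Yop.adjoint z) :=
    InnerProductSpace.toDual_symm_apply
  have h3 : g (Yop.adjoint z) = F₀ ⟨Y' z, LinearMap.mem_range_self _ z⟩ :=
    hg ⟨Y' z, LinearMap.mem_range_self _ z⟩
  have h4 : F₀ ⟨Y' z, LinearMap.mem_range_self _ z⟩ = L z := hf₀eval z
  have h5 : L z = inner ℝ (Xop x) z := by
    simp [hL, ContinuousLinearMap.adjoint_inner_right, real_inner_comm]
  rw [h1, h2, h3, h4, h5]
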